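/- For every natural number n ≥ 1, π(n²+2n) - π(n²) ≤ π(2n) - π(n) + 1 + ∑_{d squarefree, d>1, ω(d) even, prime factors ≤ n} ⌊((n² mod d)+(2n mod d))/d⌋, where ω(d) is the number of (distinct) prime factors of d and π the prime-counting function. -/

import Mathlib

open ArithmeticFunction Nat Finset
open scoped ArithmeticFunction.Moebius ArithmeticFunction.zeta

/-- Index set: squarefree `d > 1` all of whose prime factors are `≤ n`. -/
def sqfSet (n : ℕ) : Finset ℕ :=
  (Finset.range (primorial n + 1)).filter
    (fun d => 1 < d ∧ Squarefree d ∧ ∀ p ∈ d.primeFactors, p ≤ n)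

/-- The transformed Legendre function `φ_T`. -/
def phiT (M₁ M₂ n : ℕ) : ℤ :=
  -∑ d ∈ sqfSet n, ArithmeticFunction.moebius d * (((M₁ % d + M₂ % d) / d : ℕ) : ℤ)

lemma moebius_sum_divisors (k : ℕ) :
    ∑ d ∈ k.divisors, μ d = if k = 1 then 1 else 0 := by
  have h : (μ * ζ : ArithmeticFunction ℤ) k = (1 : ArithmeticFunction ℤ) k := by
    rw [ArithmeticFunction.moebius_mul_coe_zeta]
  rwa [ArithmeticFunction.coe_mul_zeta_apply, ArithmeticFunction.one_apply] at h

lemma squarefree_primorial' (n : ℕ) : Squarefree (primorial n) := by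
  rw [Nat.squarefree_iff_prime_squarefree]
  intro q hq hdvd
  have hq1 : q ∣ primorial n := dvd_trans (dvd_mul_right q q) hdvd
  have hqmem : q ∈ (Finset.range (n+1)).filter Nat.Prime := by
    have := (Nat.Prime.prime hq).dvd_finset_prod_iff (_root_.id : ℕ → ℕ) |>.mp hq1
    obtain ⟨p, hp, hqp⟩ := this
    have hpp := (Finset.mem_filter.mp hp).2
    rwa [(Nat.prime_dvd_prime_iff_eq hq hpp).mp hqp]
  rw [primorial, ← Finset.prod_erase_mul _ _ hqmem] at hdvd
  have : q ∣ ∏ p ∈ ((Finset.range (n+1)).filter Nat.Prime).erase q, p := by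
    have h2 := (Nat.mul_dvd_mul_iff_right hq.pos).mp hdvd
    exact h2
  obtain ⟨p, hp, hqp⟩ :=
    (Nat.Prime.prime hq).dvd_finset_prod_iff (_root_.id : ℕ → ℕ) |>.mp this
  have hpp := (Finset.mem_filter.mp (Finset.mem_of_mem_erase hp)).2
  have := (Nat.prime_dvd_prime_iff_eq hq hpp).mp hqp
  exact (Finset.ne_of_mem_erase hp).symm (this ▸ rfl)

lemma primeFactors_primorial' (n : ℕ) :
    (primorial n).primeFactors = (Finset.range (n+1)).filter Nat.Prime :=
  Nat.primeFactors_prod (fun p hp => (Finset.mem_filter.mp hp).2)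

lemma sqfSet_eq (n : ℕ) : sqfSet n = (primorial n).divisors.erase 1 := by
  ext d
  simp only [sqfSet, Finset.mem_filter, Finset.mem_range, Finset.mem_erase,
    Nat.mem_divisors, Nat.lt_succ_iff]
  constructor
  · rintro ⟨hle, h1, hsq, hfac⟩
    refine ⟨by omega, ?_, (primorial_pos n).ne'⟩
    have : d = ∏ p ∈ d.primeFactors, p := (Nat.prod_primeFactors_of_squarefree hsq).symm
    rw [this, primorial]
    apply Finset.prod_dvd_prod_of_subset
    intro p hp
    exact Finset.mem_filter.mpr ⟨Finset.mem_range.mpr (Nat.lt_succ_of_le (hfac p hp)),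
      Nat.prime_of_mem_primeFactors hp⟩
  · rintro ⟨h1, hdvd, hP⟩
    have hd0 : d ≠ 0 := by rintro rfl; exact hP (Nat.zero_dvd.mp hdvd)
    refine ⟨Nat.le_of_dvd (primorial_pos n) hdvd, by omega,
      (squarefree_primorial' n).squarefree_of_dvd hdvd, ?_⟩
    intro p hp
    have : p ∈ (primorial n).primeFactors :=
      Nat.mem_primeFactors.mpr ⟨Nat.prime_of_mem_primeFactors hp,
        dvd_trans (Nat.dvd_of_mem_primeFactors hp) hdvd, hP⟩
    rw [primeFactors_primorial'] at this
    exact Nat.lt_succ_iff.mp (Finset.mem_range.mp (Finset.mem_filter.mp this).1)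

lemma legendre (n x : ℕ) :
    ((((Finset.Ioc 0 x).filter (fun m => Nat.Coprime m (primorial n))).card : ℤ)) =
      ∑ d ∈ (primorial n).divisors, μ d * ((x / d : ℕ) : ℤ) := by
  set P := primorial n with hP
  have hP0 : P ≠ 0 := (primorial_pos n).ne'
  have step1 : ∀ d, ((x / d : ℕ) : ℤ) = ∑ m ∈ Finset.Ioc 0 x, if d ∣ m then (1:ℤ) else 0 := by
    intro d
    rw [← Nat.Ioc_filter_dvd_card_eq_div x d, Finset.card_filter]
    push_cast
    rfl
  calc (((Finset.Ioc 0 x).filter (fun m => Nat.Coprime m P)).card : ℤ)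
      = ∑ m ∈ Finset.Ioc 0 x, if Nat.Coprime m P then (1:ℤ) else 0 := by
        rw [Finset.card_filter]; push_cast; rfl
    _ = ∑ m ∈ Finset.Ioc 0 x, ∑ d ∈ (Nat.gcd P m).divisors, (μ d : ℤ) := by
        refine Finset.sum_congr rfl fun m _ => ?_
        rw [moebius_sum_divisors]
        have : Nat.Coprime m P ↔ Nat.gcd P m = 1 := by
          rw [Nat.Coprime, Nat.gcd_comm]
        simp [this]
    _ = ∑ m ∈ Finset.Ioc 0 x, ∑ d ∈ P.divisors.filter (· ∣ m), (μ d : ℤ) := by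
        refine Finset.sum_congr rfl fun m _ => ?_
        congr 1
        rw [← Nat.divisors_filter_dvd_of_dvd hP0 (Nat.gcd_dvd_left P m)]
        apply Finset.filter_congr
        intro d hd
        simp only [Nat.mem_divisors] at hd
        constructor
        · intro h; exact dvd_trans h (Nat.gcd_dvd_right P m)
        · intro h; exact Nat.dvd_gcd hd.1 h
    _ = ∑ m ∈ Finset.Ioc 0 x, ∑ d ∈ P.divisors, if d ∣ m then (μ d : ℤ) else 0 := by
        refine Finset.sum_congr rfl fun m _ => ?_
        rw [Finset.sum_filter]
    _ = ∑ d ∈ P.divisors, μ d * ((x / d : ℕ) : ℤ) := by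
        rw [Finset.sum_comm]
        refine Finset.sum_congr rfl fun d _ => ?_
        rw [step1, Finset.mul_sum]
        refine Finset.sum_congr rfl fun m _ => ?_
        split <;> simp

lemma div_rem_split (a b c : ℕ) (hc : 0 < c) :
    (a + b) / c = a / c + b / c + (a % c + b % c) / c := by
  rw [Nat.add_div hc]
  congr 1
  rcases le_or_gt c (a % c + b % c) with h | h
  · have h2 : a % c + b % c < 2 * c := by
      have := Nat.mod_lt a hc; have := Nat.mod_lt b hc; omega
    have : (a % c + b % c) / c = 1 := by
      have h1 : 1 ≤ (a % c + b % c) / c := (Nat.one_le_div_iff hc).mpr h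
      have h2' : (a % c + b % c) / c < 2 := (Nat.div_lt_iff_lt_mul hc).mpr (by omega)
      omega
    simp [h, this]
  · simp [Nat.not_le.mpr h, Nat.div_eq_of_lt h]

lemma key (n M₁ M₂ : ℕ) :
    ((((Finset.Ioc 0 (M₁ + M₂)).filter (fun m => Nat.Coprime m (primorial n))).card : ℤ)) =
      (((Finset.Ioc 0 M₁).filter (fun m => Nat.Coprime m (primorial n))).card : ℤ) +
      (((Finset.Ioc 0 M₂).filter (fun m => Nat.Coprime m (primorial n))).card : ℤ) +
      ∑ d ∈ sqfSet n, μ d * (((M₁ % d + M₂ % d) / d : ℕ) : ℤ) := by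
  rw [legendre, legendre, legendre, sqfSet_eq]
  have he : ∑ d ∈ (primorial n).divisors.erase 1,
      (μ d : ℤ) * (((M₁ % d + M₂ % d) / d : ℕ) : ℤ) =
      ∑ d ∈ (primorial n).divisors, (μ d : ℤ) * (((M₁ % d + M₂ % d) / d : ℕ) : ℤ) :=
    Finset.sum_erase _ (by simp)
  rw [he, ← Finset.sum_add_distrib, ← Finset.sum_add_distrib]
  refine Finset.sum_congr rfl fun d hd => ?_
  have hd0 : 0 < d := Nat.pos_of_mem_divisors hd
  rw [div_rem_split M₁ M₂ d hd0]
  push_cast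
  ring

lemma pi_diff {a b : ℕ} (h : a ≤ b) :
    Nat.primeCounting b = Nat.primeCounting a + ((Finset.Ioc a b).filter Nat.Prime).card := by
  rw [Nat.primeCounting, Nat.primeCounting, Nat.primeCounting',
    Nat.count_eq_card_filter_range, Nat.count_eq_card_filter_range]
  rw [Finset.range_eq_Ico,
    ← Finset.Ico_union_Ico_eq_Ico (Nat.zero_le (a+1)) (by omega : a + 1 ≤ b + 1),
    Finset.filter_union,
    Finset.card_union_of_disjoint (Finset.disjoint_filter_filter
      (Finset.Ico_disjoint_Ico_consecutive 0 (a+1) (b+1)))]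
  congr 2
  · rw [Finset.range_eq_Ico]
  rw [Finset.Ico_add_one_add_one_eq_Ioc]

lemma prime_gt_of_coprime {n m q : ℕ} (hq : q.Prime) (hqm : q ∣ m)
    (hco : Nat.Coprime m (primorial n)) : n < q := by
  by_contra h
  push_neg at h
  have hqP : q ∣ primorial n := by
    apply Finset.dvd_prod_of_mem
    exact Finset.mem_filter.mpr ⟨Finset.mem_range.mpr (by omega), hq⟩
  have : q ∣ Nat.gcd m (primorial n) := Nat.dvd_gcd hqm hqP
  rw [Nat.Coprime] at hco
  rw [hco] at this
  exact hq.one_lt.ne' (Nat.dvd_one.mp this)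

lemma stepA (n : ℕ) (hn : 1 ≤ n) :
    (Nat.primeCounting (n^2 + 2*n) : ℤ) - Nat.primeCounting (n^2) ≤
      (((Finset.Ioc 0 (n^2 + 2*n)).filter (fun m => Nat.Coprime m (primorial n))).card : ℤ) -
      (((Finset.Ioc 0 (n^2)).filter (fun m => Nat.Coprime m (primorial n))).card : ℤ) := by
  have hab : n^2 ≤ n^2 + 2*n := by omega
  rw [pi_diff hab]
  push_cast
  have hsuff : ((Finset.Ioc 0 (n^2)).filter (fun m => Nat.Coprime m (primorial n))).card +
      ((Finset.Ioc (n^2) (n^2+2*n)).filter Nat.Prime).card ≤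
      ((Finset.Ioc 0 (n^2+2*n)).filter (fun m => Nat.Coprime m (primorial n))).card := by
    rw [← Finset.card_union_of_disjoint ?hd]
    case hd =>
      rw [Finset.disjoint_left]
      intro m hm hm2
      have h1 := (Finset.mem_Ioc.mp (Finset.mem_filter.mp hm).1).2
      have h2 := (Finset.mem_Ioc.mp (Finset.mem_filter.mp hm2).1).1
      omega
    apply Finset.card_le_card
    apply Finset.union_subset
    · apply Finset.filter_subset_filter
      exact Finset.Ioc_subset_Ioc_right (by omega)
    · intro m hm
      obtain ⟨hmIoc, hmp⟩ := Finset.mem_filter.mp hm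
      obtain ⟨h1, h2⟩ := Finset.mem_Ioc.mp hmIoc
      refine Finset.mem_filter.mpr ⟨Finset.mem_Ioc.mpr ⟨by omega, h2⟩, ?_⟩
      rw [Nat.Prime.coprime_iff_not_dvd hmp]
      intro hdvd
      have : m ∈ (primorial n).primeFactors :=
        Nat.mem_primeFactors.mpr ⟨hmp, hdvd, (primorial_pos n).ne'⟩
      rw [primeFactors_primorial'] at this
      have hle := Finset.mem_range.mp (Finset.mem_filter.mp this).1
      have hnn : n ≤ n^2 := Nat.le_self_pow (by norm_num) n
      omega
  omega

lemma stepB (n : ℕ) (hn : 1 ≤ n) :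
    ((((Finset.Ioc 0 (2*n)).filter (fun m => Nat.Coprime m (primorial n))).card : ℤ)) ≤
      1 + ((Nat.primeCounting (2*n) : ℤ) - Nat.primeCounting n) := by
  rw [pi_diff (by omega : n ≤ 2*n)]
  push_cast
  have hsuff : ((Finset.Ioc 0 (2*n)).filter (fun m => Nat.Coprime m (primorial n))).card ≤
      1 + ((Finset.Ioc n (2*n)).filter Nat.Prime).card := by
    have hsub : (Finset.Ioc 0 (2*n)).filter (fun m => Nat.Coprime m (primorial n)) ⊆
        insert 1 ((Finset.Ioc n (2*n)).filter Nat.Prime) := by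
      intro m hm
      obtain ⟨hmIoc, hco⟩ := Finset.mem_filter.mp hm
      obtain ⟨h0, h2n⟩ := Finset.mem_Ioc.mp hmIoc
      rcases eq_or_ne m 1 with rfl | hm1
      · exact Finset.mem_insert_self 1 _
      · refine Finset.mem_insert_of_mem ?_
        set q := m.minFac with hq
        have hqp : q.Prime := Nat.minFac_prime hm1
        have hqd : q ∣ m := Nat.minFac_dvd m
        have hqn : n < q := prime_gt_of_coprime hqp hqd hco
        have hmq : m = q := by
          by_contra hne
          set k := m / q with hk
          have hkm : q * k = m := Nat.mul_div_cancel' hqd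
          have hk1 : k ≠ 1 := by
            intro h; rw [h, mul_one] at hkm; exact hne hkm.symm
          have hk0 : k ≠ 0 := by
            intro h; rw [h, mul_zero] at hkm; omega
          have hqp' : k.minFac.Prime := Nat.minFac_prime hk1
          have hqd' : k.minFac ∣ m := dvd_trans (Nat.minFac_dvd k) ⟨q, by rw [← hkm]; ring⟩
          have hqn' : n < k.minFac := prime_gt_of_coprime hqp' hqd' hco
          have hdd : q * k.minFac ∣ m := by
            rw [← hkm]
            exact mul_dvd_mul_left q (Nat.minFac_dvd k)
          have hle : q * k.minFac ≤ m := Nat.le_of_dvd (by omega) hdd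
          have : (n+1) * (n+1) ≤ q * k.minFac := Nat.mul_le_mul (by omega) (by omega)
          nlinarith
        refine Finset.mem_filter.mpr ⟨Finset.mem_Ioc.mpr ⟨by omega, h2n⟩, hmq ▸ hqp⟩
    calc ((Finset.Ioc 0 (2*n)).filter (fun m => Nat.Coprime m (primorial n))).card
        ≤ (insert 1 ((Finset.Ioc n (2*n)).filter Nat.Prime)).card := Finset.card_le_card hsub
      _ ≤ ((Finset.Ioc n (2*n)).filter Nat.Prime).card + 1 := Finset.card_insert_le _ _
      _ = 1 + _ := by omega
  omega

lemma stepC (n : ℕ) :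
    ∑ d ∈ sqfSet n, (μ d : ℤ) * (((n^2 % d + 2*n % d) / d : ℕ) : ℤ) ≤
      ∑ d ∈ (sqfSet n).filter (fun d => Even d.primeFactors.card),
        (((n^2 % d + 2*n % d) / d : ℕ) : ℤ) := by
  rw [Finset.sum_filter]
  apply Finset.sum_le_sum
  intro d hd
  obtain ⟨-, h1, hsq, -⟩ := Finset.mem_filter.mp hd
  have hd0 : d ≠ 0 := by omega
  have hcard : d.primeFactors.card = d.primeFactorsList.length := by
    rw [← Nat.toFinset_factors]
    exact List.toFinset_card_of_nodup ((Nat.squarefree_iff_nodup_primeFactorsList hd0).mp hsq)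
  have hμ : (μ d : ℤ) = (-1) ^ d.primeFactors.card := by
    rw [ArithmeticFunction.moebius_apply_of_squarefree hsq,
      ArithmeticFunction.cardFactors_apply, hcard]
  by_cases he : Even d.primeFactors.card
  · rw [if_pos he, hμ, Even.neg_one_pow he, one_mul]
  · rw [if_neg he, hμ, Odd.neg_one_pow (Nat.not_even_iff_odd.mp he), neg_one_mul]
    simp only [neg_nonpos]
    positivity

theorem stmt_19 (n : ℕ) (hn : 1 ≤ n) :
    (Nat.primeCounting (n ^ 2 + 2 * n) : ℤ) - Nat.primeCounting (n ^ 2) ≤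
      (Nat.primeCounting (2 * n) : ℤ) - Nat.primeCounting n + 1 +
        ∑ d ∈ (sqfSet n).filter (fun d => Even d.primeFactors.card),
          (((n ^ 2 % d + 2 * n % d) / d : ℕ) : ℤ) := by
  have hkey := key n (n^2) (2*n)
  have hA := stepA n hn
  have hB := stepB n hn
  have hC := stepC n
  linarith
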